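/- Let (M,ρ) be a finite pseudometric space, G a finite tree joining M in which every vertex of degree 1 belongs to M, and 𝒢 = (G,w) a generalized minimal parametric filling of type G. Let v be an interior vertex of G of degree 3. Then for any pair of edges of G incident to v there exists an exact path of 𝒢 containing both edges of the pair. -/

import Mathlib

open scoped BigOperators

namespace MinFill

variable {V : Type*}

/-- The total weight of a (generalized) weighted graph: the sum of the weights
of its edges. -/
noncomputable def graphWeight (G : SimpleGraph V) (w : Sym2 V → ℝ) : ℝ :=
  ∑ᶠ e ∈ G.edgeSet, w e

/-- The weight of a walk: the sum of the weights of its edges. -/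
def walkWeight {G : SimpleGraph V} (w : Sym2 V → ℝ) {u v : V} (p : G.Walk u v) : ℝ :=
  (p.edges.map w).sum

/-- `dw G w u v` is the minimum over simple paths in `G` from `u` to `v` of the
sum of the weights of their edges. -/
noncomputable def dw (G : SimpleGraph V) (w : Sym2 V → ℝ) (u v : V) : ℝ :=
  sInf {r : ℝ | ∃ p : G.Walk u v, p.IsPath ∧ walkWeight w p = r}

/-- The degree of a vertex: the number of edges incident to it. -/
noncomputable def deg (G : SimpleGraph V) (v : V) : ℕ :=
  (G.neighborSet v).ncard

/-- `ρ` is a pseudometric on the subset `M`: symmetric, nonnegative, vanishing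
on the diagonal and satisfying the triangle inequality. -/
def IsPseudometricOn (M : Set V) (ρ : V → V → ℝ) : Prop :=
  (∀ p ∈ M, ∀ q ∈ M, ρ p q = ρ q p) ∧
  (∀ p ∈ M, ∀ q ∈ M, 0 ≤ ρ p q) ∧
  (∀ p ∈ M, ρ p p = 0) ∧
  (∀ p ∈ M, ∀ q ∈ M, ∀ r ∈ M, ρ p r ≤ ρ p q + ρ q r)

/-- `(G, w)` is a generalized filling of `(M, ρ)` (with `M ⊆ V`): `G` is
connected (and joins `M`), and for all boundary points `p, q ∈ M` every simple
path in `G` from `p` to `q` has weight at least `ρ p q` (equivalently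
`ρ p q ≤ d_w(p, q)`). -/
def IsGenFilling (G : SimpleGraph V) (w : Sym2 V → ℝ) (M : Set V) (ρ : V → V → ℝ) : Prop :=
  G.Connected ∧ ∀ p ∈ M, ∀ q ∈ M, ∀ γ : G.Walk p q, γ.IsPath → ρ p q ≤ walkWeight w γ

/- auxiliary lemmas -/

lemma sum_map_ite {α : Type*} [DecidableEq α] (a : α) (c : ℝ) (l : List α) (hl : l.Nodup) :
    (l.map fun e => if e = a then c else 0).sum = if a ∈ l then c else 0 := by
  induction l with
  | nil => simp
  | cons h t ih =>
    rw [List.nodup_cons] at hl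
    simp only [List.map_cons, List.sum_cons, ih hl.2]
    by_cases h1 : h = a
    · subst h1
      simp [hl.1]
    · simp [h1, Ne.symm h1, List.mem_cons]

lemma sum_map_add {α : Type*} (f g : α → ℝ) (l : List α) :
    (l.map fun e => f e + g e).sum = (l.map f).sum + (l.map g).sum := by
  induction l with
  | nil => simp
  | cons h t ih => simp [ih]; ring

lemma sum_map_sub {α : Type*} (f g : α → ℝ) (l : List α) :
    (l.map fun e => f e - g e).sum = (l.map f).sum - (l.map g).sum := by
  induction l with
  | nil => simp
  | cons h t ih => simp [ih]; ring

lemma exists_first_edge {G : SimpleGraph V} {v y : V} (p : G.Walk v y) (h : v ≠ y) :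
    ∃ e ∈ p.edges, v ∈ e := by
  cases p with
  | nil => exact absurd rfl h
  | cons h' p' =>
    exact ⟨_, List.mem_cons_self, Sym2.mem_mk_left _ _⟩

lemma two_incident_edges {G : SimpleGraph V} {x y v : V} (γ : G.Walk x y) (hγ : γ.IsPath)
    (hx : x ≠ v) (hy : y ≠ v) (hvs : v ∈ γ.support) :
    ∃ f₁ ∈ γ.edges, ∃ f₂ ∈ γ.edges, f₁ ≠ f₂ ∧ v ∈ f₁ ∧ v ∈ f₂ := by
  classical
  have hspec := γ.take_spec hvs
  set p := γ.takeUntil v hvs with hp_def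
  set q := γ.dropUntil v hvs with hq_def
  obtain ⟨f₂, hf₂, hvf₂⟩ := exists_first_edge q (Ne.symm hy)
  obtain ⟨f₁, hf₁r, hvf₁⟩ := exists_first_edge p.reverse (Ne.symm hx)
  have hf₁ : f₁ ∈ p.edges := by
    rw [SimpleGraph.Walk.edges_reverse, List.mem_reverse] at hf₁r
    exact hf₁r
  have hedges : γ.edges = p.edges ++ q.edges := by
    rw [← hspec, SimpleGraph.Walk.edges_append]
  have hnodup : (p.edges ++ q.edges).Nodup := by
    rw [← hedges]; exact hγ.isTrail.edges_nodup
  have hdisj := (List.nodup_append.mp hnodup).2.2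
  refine ⟨f₁, ?_, f₂, ?_, ?_, hvf₁, hvf₂⟩
  · rw [hedges]; exact List.mem_append_left _ hf₁
  · rw [hedges]; exact List.mem_append_right _ hf₂
  · intro hEq
    exact hdisj _ hf₁ _ (hEq ▸ hf₂) rfl

/-- In a generalized minimal parametric filling, any pair of
edges incident to an interior vertex of degree 3 is contained in a common
exact path. -/
theorem deg_three_edges_mem_exact_path {V : Type*} [Fintype V] (G : SimpleGraph V)
    (M : Set V) (ρ : V → V → ℝ) (hρ : IsPseudometricOn M ρ) (hG : G.IsTree)
    (hM : ∀ v : V, deg G v = 1 → v ∈ M) (w : Sym2 V → ℝ)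
    (hfill : IsGenFilling G w M ρ)
    (hmin : ∀ w' : Sym2 V → ℝ, IsGenFilling G w' M ρ →
      graphWeight G w ≤ graphWeight G w')
    (v : V) (hv : v ∉ M) (hdeg : deg G v = 3) :
    ∀ e₁ ∈ G.edgeSet, ∀ e₂ ∈ G.edgeSet, e₁ ≠ e₂ → v ∈ e₁ → v ∈ e₂ →
      ∃ x ∈ M, ∃ y ∈ M, ∃ γ : G.Walk x y,
        γ.IsPath ∧ e₁ ∈ γ.edges ∧ e₂ ∈ γ.edges ∧ walkWeight w γ = ρ x y := by
  classical
  intro e₁ he₁ e₂ he₂ hne hv₁ hv₂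
  by_contra hcon
  push_neg at hcon
  -- extract neighbors a₁ a₂
  obtain ⟨a₁, rfl⟩ := Sym2.mem_iff_exists.mp hv₁
  obtain ⟨a₂, rfl⟩ := Sym2.mem_iff_exists.mp hv₂
  have hadj₁ : G.Adj v a₁ := he₁
  have hadj₂ : G.Adj v a₂ := he₂
  have hva₁ : v ≠ a₁ := hadj₁.ne
  have hva₂ : v ≠ a₂ := hadj₂.ne
  have ha12 : a₁ ≠ a₂ := by
    intro h; exact hne (by rw [h])
  -- third neighbor
  have hsub : ¬ (G.neighborSet v ⊆ {a₁, a₂}) := by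
    intro hs
    have h1 := Set.ncard_le_ncard hs ((Set.finite_singleton a₂).insert a₁)
    have h2 : ({a₁, a₂} : Set V).ncard ≤ 2 := by
      refine (Set.ncard_insert_le _ _).trans ?_
      simp
    rw [show (G.neighborSet v).ncard = 3 from hdeg] at h1
    omega
  obtain ⟨a₃, ha₃, ha₃'⟩ := Set.not_subset.mp hsub
  have hadj₃ : G.Adj v a₃ := ha₃
  have hva₃ : v ≠ a₃ := hadj₃.ne
  have ha13 : a₁ ≠ a₃ := by intro h; exact ha₃' (by simp [← h])
  have ha23 : a₂ ≠ a₃ := by intro h; exact ha₃' (by simp [← h])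
  set e₁ : Sym2 V := s(v, a₁) with he₁def
  set e₂ : Sym2 V := s(v, a₂) with he₂def
  set e₃ : Sym2 V := s(v, a₃) with he₃def
  have he₃ : e₃ ∈ G.edgeSet := hadj₃
  have hne13 : e₁ ≠ e₃ := fun h => ha13 (Sym2.congr_right.mp h)
  have hne23 : e₂ ≠ e₃ := fun h => ha23 (Sym2.congr_right.mp h)
  -- classification of edges at v
  have hnbr : G.neighborSet v = {a₁, a₂, a₃} := by
    have hsub3 : ({a₁, a₂, a₃} : Set V) ⊆ G.neighborSet v := by
      intro b hb
      rcases hb with rfl | rfl | rfl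
      · exact hadj₁
      · exact hadj₂
      · exact ha₃
    have hcard : ({a₁, a₂, a₃} : Set V).ncard = 3 := by
      rw [Set.ncard_insert_of_notMem (by simp [ha12, ha13]),
        Set.ncard_insert_of_notMem (by simp [ha23]), Set.ncard_singleton]
    exact (Set.eq_of_subset_of_ncard_le hsub3 (by rw [hcard]; exact le_of_eq hdeg) (Set.toFinite _)).symm
  have hclass : ∀ e ∈ G.edgeSet, v ∈ e → e = e₁ ∨ e = e₂ ∨ e = e₃ := by
    intro e heG hve
    obtain ⟨b, rfl⟩ := Sym2.mem_iff_exists.mp hve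
    have hb : b ∈ G.neighborSet v := heG
    rw [hnbr] at hb
    rcases hb with rfl | rfl | rfl
    · exact Or.inl rfl
    · exact Or.inr (Or.inl rfl)
    · exact Or.inr (Or.inr rfl)
  -- unique paths
  have hx := fun x y => hG.existsUnique_path x y
  choose P hP hPu using hx
  -- choose ε
  haveI : Nonempty V := ⟨v⟩
  set f : V × V → ℝ := fun xy =>
    if xy.1 ∈ M ∧ xy.2 ∈ M ∧ e₁ ∈ (P xy.1 xy.2).edges ∧ e₂ ∈ (P xy.1 xy.2).edges
    then (walkWeight w (P xy.1 xy.2) - ρ xy.1 xy.2) / 2 else 1 with hf_def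
  set ε : ℝ := Finset.univ.inf' Finset.univ_nonempty f with hε_def
  have hf_pos : ∀ xy : V × V, 0 < f xy := by
    intro xy
    simp only [hf_def]
    split_ifs with h
    · obtain ⟨hxM, hyM, hE1, hE2⟩ := h
      have hle := hfill.2 _ hxM _ hyM _ (hP xy.1 xy.2)
      have hneq := hcon xy.1 hxM xy.2 hyM (P xy.1 xy.2) (hP xy.1 xy.2) hE1 hE2
      have : ρ xy.1 xy.2 < walkWeight w (P xy.1 xy.2) := lt_of_le_of_ne hle (Ne.symm hneq)
      linarith
    · norm_num
  have hε_pos : 0 < ε := by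
    rw [hε_def, Finset.lt_inf'_iff]
    exact fun b _ => hf_pos b
  have hε_le : ∀ x ∈ M, ∀ y ∈ M, ∀ γ : G.Walk x y, γ.IsPath → e₁ ∈ γ.edges → e₂ ∈ γ.edges →
      ε ≤ (walkWeight w γ - ρ x y) / 2 := by
    intro x hxM y hyM γ hγ hE1 hE2
    have hγeq : γ = P x y := hPu x y γ hγ
    subst hγeq
    have hle := Finset.inf'_le f (Finset.mem_univ (x, y))
    have h2 : f (x, y) = (walkWeight w (P x y) - ρ x y) / 2 := by
      simp only [hf_def]
      rw [if_pos ⟨hxM, hyM, hE1, hE2⟩]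
    exact le_of_le_of_eq hle h2
  -- the modified weight
  set w' : Sym2 V → ℝ := fun e =>
    w e + ((if e = e₃ then ε else 0) - (if e = e₁ then ε else 0) - (if e = e₂ then ε else 0))
    with hw'_def
  have hwalk : ∀ {x y : V} (γ : G.Walk x y), γ.IsPath →
      walkWeight w' γ = walkWeight w γ + ((if e₃ ∈ γ.edges then ε else 0)
        - (if e₁ ∈ γ.edges then ε else 0) - (if e₂ ∈ γ.edges then ε else 0)) := by
    intro x y γ hγ
    have hnd := hγ.isTrail.edges_nodup
    unfold walkWeight
    rw [hw'_def]
    rw [sum_map_add w (fun e => (if e = e₃ then ε else 0) - (if e = e₁ then ε else 0)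
      - (if e = e₂ then ε else 0)) γ.edges]
    congr 1
    rw [sum_map_sub (fun e => (if e = e₃ then ε else 0) - (if e = e₁ then ε else 0))
      (fun e => if e = e₂ then ε else 0) γ.edges,
      sum_map_sub (fun e => if e = e₃ then ε else 0) (fun e => if e = e₁ then ε else 0) γ.edges,
      sum_map_ite e₃ ε _ hnd, sum_map_ite e₁ ε _ hnd, sum_map_ite e₂ ε _ hnd]
  -- key claim: walks through exactly one of e₁,e₂ contain e₃
  have hkey : ∀ {x y : V} (γ : G.Walk x y), γ.IsPath → x ∈ M → y ∈ M →
      (e₁ ∈ γ.edges ∧ e₂ ∉ γ.edges) ∨ (e₂ ∈ γ.edges ∧ e₁ ∉ γ.edges) → e₃ ∈ γ.edges := by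
    intro x y γ hγ hxM hyM hcase
    have hvs : v ∈ γ.support := by
      rcases hcase with ⟨h1, _⟩ | ⟨h2, _⟩
      · exact γ.fst_mem_support_of_mem_edges h1
      · exact γ.fst_mem_support_of_mem_edges h2
    have hx : x ≠ v := fun h => hv (h ▸ hxM)
    have hy : y ≠ v := fun h => hv (h ▸ hyM)
    obtain ⟨f₁, hf₁, f₂, hf₂, hfne, hvf₁, hvf₂⟩ := two_incident_edges γ hγ hx hy hvs
    have hc₁ := hclass f₁ (γ.edges_subset_edgeSet hf₁) hvf₁
    have hc₂ := hclass f₂ (γ.edges_subset_edgeSet hf₂) hvf₂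
    rcases hcase with ⟨_, hno₂⟩ | ⟨_, hno₁⟩
    · -- e₂ not in edges, so f₁, f₂ ∈ {e₁, e₃}, distinct
      have hc₁' : f₁ = e₁ ∨ f₁ = e₃ := by
        rcases hc₁ with h | h | h
        · exact Or.inl h
        · exact absurd (h ▸ hf₁) hno₂
        · exact Or.inr h
      have hc₂' : f₂ = e₁ ∨ f₂ = e₃ := by
        rcases hc₂ with h | h | h
        · exact Or.inl h
        · exact absurd (h ▸ hf₂) hno₂
        · exact Or.inr h
      rcases hc₁' with rfl | rfl
      · rcases hc₂' with rfl | rfl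
        · exact absurd rfl hfne
        · exact hf₂
      · exact hf₁
    · have hc₁' : f₁ = e₂ ∨ f₁ = e₃ := by
        rcases hc₁ with h | h | h
        · exact absurd (h ▸ hf₁) hno₁
        · exact Or.inl h
        · exact Or.inr h
      have hc₂' : f₂ = e₂ ∨ f₂ = e₃ := by
        rcases hc₂ with h | h | h
        · exact absurd (h ▸ hf₂) hno₁
        · exact Or.inl h
        · exact Or.inr h
      rcases hc₁' with rfl | rfl
      · rcases hc₂' with rfl | rfl
        · exact absurd rfl hfne
        · exact hf₂
      · exact hf₁
  -- w' is a filling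
  have hfill' : IsGenFilling G w' M ρ := by
    refine ⟨hfill.1, ?_⟩
    intro x hxM y hyM γ hγ
    rw [hwalk γ hγ]
    have hbase := hfill.2 x hxM y hyM γ hγ
    by_cases h1 : e₁ ∈ γ.edges
    · by_cases h2 : e₂ ∈ γ.edges
      · have := hε_le x hxM y hyM γ hγ h1 h2
        have h3 : (0:ℝ) ≤ (if e₃ ∈ γ.edges then ε else 0) := by
          split_ifs <;> linarith
        simp only [h1, h2, if_pos]
        linarith
      · have h3 := hkey γ hγ hxM hyM (Or.inl ⟨h1, h2⟩)
        simp only [h1, h2, h3, if_pos, if_neg, if_true, if_false]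
        linarith
    · by_cases h2 : e₂ ∈ γ.edges
      · have h3 := hkey γ hγ hxM hyM (Or.inr ⟨h2, h1⟩)
        simp only [h1, h2, h3, if_pos, if_neg, if_true, if_false]
        linarith
      · have h3 : (0:ℝ) ≤ (if e₃ ∈ γ.edges then ε else 0) := by
          split_ifs <;> linarith
        simp only [h1, h2, if_neg, if_false]
        linarith
  -- graph weight decreases
  have hfin : G.edgeSet.Finite := Set.toFinite _
  have hW : graphWeight G w' = graphWeight G w - ε := by
    unfold graphWeight
    rw [← hfin.coe_toFinset, finsum_mem_coe_finset, finsum_mem_coe_finset]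
    have hmem₁ : e₁ ∈ hfin.toFinset := hfin.mem_toFinset.mpr he₁
    have hmem₂ : e₂ ∈ hfin.toFinset := hfin.mem_toFinset.mpr he₂
    have hmem₃ : e₃ ∈ hfin.toFinset := hfin.mem_toFinset.mpr he₃
    rw [hw'_def]
    rw [Finset.sum_add_distrib]
    have h3 : ∀ (a : Sym2 V), (∑ e ∈ hfin.toFinset, if e = a then ε else 0)
        = if a ∈ hfin.toFinset then ε else 0 := by
      intro a
      rw [Finset.sum_ite_eq' hfin.toFinset a (fun _ => ε)]
    rw [Finset.sum_sub_distrib, Finset.sum_sub_distrib, h3, h3, h3]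
    rw [if_pos hmem₁, if_pos hmem₂, if_pos hmem₃]
    ring
  have := hmin w' hfill'
  rw [hW] at this
  linarith


end MinFill
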